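/- Fix C ∈ (0,∞) and d ≥ 1. On the convex set 𝓜 := {A positive definite d×d : A ≤ C·I}, the function Ψ(M) := −log det(M) is (1/C²)-strongly convex with respect to the Frobenius norm: Ψ(N) − Ψ(M) − DΨ(M)(N−M) ≥ (1/(2C²))·|N−M|² for all M, N ∈ 𝓜, where DΨ(M)E = −tr(M^{−1}E). -/

import Mathlib

open Matrix

/-- The Frobenius norm `|A| = tr(Aᵀ A)^{1/2}` of a real matrix. -/
noncomputable def frob {d : ℕ} (A : Matrix (Fin d) (Fin d) ℝ) : ℝ :=
  Real.sqrt (Aᵀ * A).trace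



private lemma hasDerivAt_aux1 {t : ℝ} (ht : 0 < t) :
    HasDerivAt (fun t : ℝ => (4*t - t^2 - 3)/2 - Real.log t) (2 - t - 1/t) t := by
  have h1 : HasDerivAt (fun t : ℝ => (4*t - t^2 - 3)/2) ((4 - 2*t)/2) t := by
    have : HasDerivAt (fun t : ℝ => 4*t - t^2 - 3) (4 - 2*t) t := by
      simpa using (((hasDerivAt_id t).const_mul 4).sub (hasDerivAt_pow 2 t)).sub_const 3
    simpa using this.div_const 2
  have h2 := Real.hasDerivAt_log ht.ne'
  have := h1.sub h2
  refine this.congr_deriv ?_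
  ring

private lemma log_le_aux1 {x : ℝ} (hx : 0 < x) (hx1 : x ≤ 1) :
    Real.log x ≤ (4*x - x^2 - 3)/2 := by
  set f : ℝ → ℝ := fun t => (4*t - t^2 - 3)/2 - Real.log t with hf
  have hanti : AntitoneOn f (Set.Ioi (0:ℝ)) := by
    apply antitoneOn_of_deriv_nonpos (convex_Ioi 0)
    · exact ((continuousOn_id.const_smul (4:ℝ)).sub (continuousOn_pow 2)).sub
        (continuousOn_const) |>.div_const 2 |>.sub (Real.continuousOn_log.mono (by
          intro y hy; simpa using (ne_of_gt hy)))
    · intro t ht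
      rw [interior_Ioi] at ht
      exact ((hasDerivAt_aux1 ht).differentiableAt).differentiableWithinAt
    · intro t ht
      rw [interior_Ioi] at ht
      rw [(hasDerivAt_aux1 ht).deriv]
      have h0 : (0:ℝ) < t := ht
      have h1 : 1/t * t = 1 := by field_simp
      nlinarith [sq_nonneg (t-1)]
  have h := hanti (Set.mem_Ioi.mpr hx) (Set.mem_Ioi.mpr one_pos) hx1
  simp only [hf, Real.log_one] at h
  linarith

private lemma hasDerivAt_aux2 {t : ℝ} (ht : 0 < t) :
    HasDerivAt (fun t : ℝ => (t - t⁻¹)/2 - Real.log t) ((1 + t⁻¹^2)/2 - 1/t) t := by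
  have h1 : HasDerivAt (fun t : ℝ => (t - t⁻¹)/2) ((1 - -(t^2)⁻¹)/2) t := by
    exact ((hasDerivAt_id t).sub (hasDerivAt_inv ht.ne')).div_const 2
  have h2 := Real.hasDerivAt_log ht.ne'
  have := h1.sub h2
  refine this.congr_deriv ?_
  field_simp
  ring

private lemma log_le_aux2 {x : ℝ} (hx1 : 1 ≤ x) :
    Real.log x ≤ (x - x⁻¹)/2 := by
  set f : ℝ → ℝ := fun t => (t - t⁻¹)/2 - Real.log t with hf
  have hmono : MonotoneOn f (Set.Ici (1:ℝ)) := by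
    apply monotoneOn_of_deriv_nonneg (convex_Ici 1)
    · apply ContinuousOn.sub
      · apply ContinuousOn.div_const
        apply continuousOn_id.sub
        exact continuousOn_inv₀.mono (by intro y hy; simp at hy ⊢; linarith)
      · exact Real.continuousOn_log.mono (by intro y hy; simp at hy ⊢; linarith)
    · intro t ht
      rw [interior_Ici] at ht
      have ht0 : (0:ℝ) < t := lt_trans one_pos ht
      exact ((hasDerivAt_aux2 ht0).differentiableAt).differentiableWithinAt
    · intro t ht
      rw [interior_Ici] at ht
      have ht0 : (0:ℝ) < t := lt_trans one_pos ht
      rw [(hasDerivAt_aux2 ht0).deriv]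
      have ht1 : (1:ℝ) < t := ht
      have h2 : 1/t = t⁻¹ := one_div t
      rw [h2]
      nlinarith [sq_nonneg (t⁻¹ - 1)]
  have h := hmono (Set.mem_Ici.mpr le_rfl) (Set.mem_Ici.mpr hx1) hx1
  simp only [hf, Real.log_one, inv_one] at h
  linarith

private lemma scalar_key {x p C : ℝ} (hx : 0 < x) (hp : 0 ≤ p) (hpC : p ≤ C)
    (hxpC : x * p ≤ C) (hC : 0 < C) :
    (x - 1)^2 * p ≤ 2 * C * (x - 1 - Real.log x) := by
  rcases le_total x 1 with h1 | h1
  · have hlog := log_le_aux1 hx h1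
    have key : (x-1)^2 ≤ 2 * (x - 1 - Real.log x) := by nlinarith
    calc (x-1)^2 * p ≤ (x-1)^2 * C := by nlinarith [sq_nonneg (x-1)]
    _ ≤ 2 * C * (x - 1 - Real.log x) := by nlinarith
  · have hlog := log_le_aux2 h1
    have hxi : x * x⁻¹ = 1 := mul_inv_cancel₀ hx.ne'
    have key : (x-1)^2 ≤ 2 * x * (x - 1 - Real.log x) := by nlinarith
    calc (x-1)^2 * p ≤ 2 * x * (x - 1 - Real.log x) * p := by
          nlinarith [mul_le_mul_of_nonneg_right key hp]
    _ ≤ 2 * C * (x - 1 - Real.log x) := by nlinarith [sq_nonneg (x-1)]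


variable {n : Type*} [Fintype n] [DecidableEq n]

private lemma diag_nonneg' {A : Matrix n n ℝ} (hA : A.PosSemidef) (i : n) : 0 ≤ A i i := by
  exact hA.diag_nonneg

private lemma trace_nonneg' {A : Matrix n n ℝ} (hA : A.PosSemidef) : 0 ≤ A.trace := by
  rw [Matrix.trace]
  exact Finset.sum_nonneg fun i _ => diag_nonneg' hA i

open scoped MatrixOrder in
private lemma trace_mul_psd_nonneg {A B : Matrix n n ℝ} (hA : A.PosSemidef) (hB : B.PosSemidef) :
    0 ≤ (A * B).trace := by
  have h2 : (A * B).trace = (CFC.sqrt A * B * CFC.sqrt A).trace :=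
    calc (A * B).trace = (CFC.sqrt A * CFC.sqrt A * B).trace := by
          rw [CFC.sqrt_mul_sqrt_self A hA.nonneg]
    _ = (CFC.sqrt A * B * CFC.sqrt A).trace := (trace_mul_cycle _ _ _).symm
  rw [h2]
  have := hB.mul_mul_conjTranspose_same (CFC.sqrt A)
  rw [(CFC.sqrt_nonneg A).posSemidef.1.eq] at this
  exact trace_nonneg' this

private lemma trace_mul_le' {B P : Matrix n n ℝ} (hB : B.PosSemidef) {c : ℝ}
    (hP : (c • (1 : Matrix n n ℝ) - P).PosSemidef) : (B * P).trace ≤ c * B.trace := by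
  have h := trace_mul_psd_nonneg hB hP
  have h2 : B * (c • (1 : Matrix n n ℝ) - P) = c • B - B * P := by
    rw [mul_sub, mul_smul_comm, mul_one]
  rw [h2, trace_sub, trace_smul, smul_eq_mul] at h
  linarith

private lemma posDef_conj' {A B : Matrix n n ℝ} (hA : A.PosDef) (hB : IsUnit B.det) :
    (Bᴴ * A * B).PosDef := by
  refine PosDef.of_dotProduct_mulVec_pos (isHermitian_conjTranspose_mul_mul B hA.1) fun x hx => ?_
  have hinj : Function.Injective B.mulVec :=
    mulVec_injective_iff_isUnit.mpr ((isUnit_iff_isUnit_det B).mpr hB)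
  have hBx : B *ᵥ x ≠ 0 := fun h => hx (hinj (by simp [h]))
  simpa only [star_mulVec, dotProduct_mulVec, vecMul_vecMul] using hA.dotProduct_mulVec_pos hBx

private lemma trace_mul_diagonal' (P : Matrix n n ℝ) (w : n → ℝ) :
    (P * diagonal w).trace = ∑ i, w i * P i i := by
  simp [Matrix.trace, Matrix.diag, mul_diagonal, mul_comm]

private lemma shift_psd {A : Matrix n n ℝ} {c : ℝ} (hc : 0 < c)
    (h : (c • (1 : Matrix n n ℝ) - A * Aᴴ).PosSemidef) :
    (c • (1 : Matrix n n ℝ) - Aᴴ * A).PosSemidef := by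
  rw [conjTranspose_eq_transpose_of_trivial] at h ⊢
  refine PosSemidef.of_dotProduct_mulVec_nonneg ?_ ?_
  · simp [Matrix.IsHermitian, conjTranspose_sub, conjTranspose_smul,
      conjTranspose_eq_transpose_of_trivial, Matrix.transpose_mul]
  · intro x
    have key : ∀ (X : Matrix n n ℝ) (y : n → ℝ),
        star y ⬝ᵥ ((c • (1 : Matrix n n ℝ) - X) *ᵥ y) = c * (y ⬝ᵥ y) - y ⬝ᵥ (X *ᵥ y) := by
      intro X y
      rw [sub_mulVec, dotProduct_sub, smul_mulVec, one_mulVec, dotProduct_smul]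
      simp [smul_eq_mul]
    rw [key]
    set u := A *ᵥ x with hu
    set w := Aᵀ *ᵥ u with hw
    have h1 : x ⬝ᵥ ((Aᵀ * A) *ᵥ x) = u ⬝ᵥ u := by
      rw [← mulVec_mulVec, dotProduct_mulVec, vecMul_transpose]
    rw [h1]
    have h2 := h.dotProduct_mulVec_nonneg u
    rw [key] at h2
    have h3 : u ⬝ᵥ ((A * Aᵀ) *ᵥ u) = w ⬝ᵥ w := by
      rw [← mulVec_mulVec, dotProduct_mulVec, hw, ← mulVec_transpose]
    rw [h3] at h2
    have h4 : u ⬝ᵥ u = x ⬝ᵥ w := by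
      conv_rhs => rw [hw, dotProduct_mulVec, vecMul_transpose]
    have hCS : (x ⬝ᵥ w) ^ 2 ≤ (x ⬝ᵥ x) * (w ⬝ᵥ w) := by
      have := Finset.sum_mul_sq_le_sq_mul_sq Finset.univ x w
      simpa [dotProduct, pow_two] using this
    have hxx : 0 ≤ x ⬝ᵥ x := Finset.sum_nonneg fun i _ => mul_self_nonneg (x i)
    have huu : 0 ≤ u ⬝ᵥ u := Finset.sum_nonneg fun i _ => mul_self_nonneg (u i)
    rcases eq_or_lt_of_le huu with h5 | h5
    · nlinarith
    · nlinarith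



open scoped MatrixOrder in
set_option maxHeartbeats 1000000 in
/-- On `𝓜 = {A pos. def. : A ≤ C·I}`, the function `Ψ(M) = −log det(M)` is `(1/C²)`-strongly
convex w.r.t. the Frobenius norm, where the derivative is `DΨ(M)E = −tr(M⁻¹E)`. -/
theorem neg_log_det_strongly_convex {d : ℕ} (hd : 1 ≤ d) (C : ℝ) (hC : 0 < C)
    (M N : Matrix (Fin d) (Fin d) ℝ) (hM : M.PosDef) (hN : N.PosDef)
    (hMC : ((C • (1 : Matrix (Fin d) (Fin d) ℝ)) - M).PosSemidef)
    (hNC : ((C • (1 : Matrix (Fin d) (Fin d) ℝ)) - N).PosSemidef) :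
    1 / (2 * C ^ 2) * frob (N - M) ^ 2 ≤
      (-Real.log N.det) - (-Real.log M.det) - (-(M⁻¹ * (N - M)).trace) := by
  classical
  have hMdet : 0 < M.det := hM.det_pos
  have hNdet : 0 < N.det := hN.det_pos
  have hMdetu : IsUnit M.det := hMdet.ne'.isUnit
  set S := CFC.sqrt M with hSdef
  have hSS : S * S = M := CFC.sqrt_mul_sqrt_self M hM.posSemidef.nonneg
  have hSherm : S.IsHermitian := (CFC.sqrt_nonneg M).posSemidef.1
  have hSdet2 : S.det * S.det = M.det := by rw [← det_mul, hSS]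
  have hSdet : IsUnit S.det := by
    refine IsUnit.mk0 _ fun h => ?_
    rw [h, mul_zero] at hSdet2
    exact hMdet.ne hSdet2
  set Z := S⁻¹ * N * S⁻¹ with hZdef
  have hSinvH : S⁻¹.IsHermitian := hSherm.inv
  have hZposdef : Z.PosDef := by
    have h1 : Z = (S⁻¹)ᴴ * N * S⁻¹ := by rw [hSinvH.eq]
    rw [h1]
    exact posDef_conj' hN (isUnit_nonsing_inv_det S hSdet)
  have hZH : Z.IsHermitian := hZposdef.1
  set ev : Fin d → ℝ := hZH.eigenvalues with hev
  have hevpos : ∀ i, 0 < ev i := hZposdef.eigenvalues_pos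
  set V : Matrix (Fin d) (Fin d) ℝ := (hZH.eigenvectorUnitary : Matrix (Fin d) (Fin d) ℝ) with hVdef
  have hVV' : V * star V = 1 := mem_unitaryGroup_iff.mp hZH.eigenvectorUnitary.2
  have hVV : star V * V = 1 := mem_unitaryGroup_iff'.mp hZH.eigenvectorUnitary.2
  have hspec : Z = V * diagonal ev * star V := by
    have := hZH.spectral_theorem
    simpa using this
  -- N = S * Z * S
  have hNZ : N = S * Z * S := by
    rw [hZdef, ← Matrix.mul_assoc, ← Matrix.mul_assoc, mul_nonsing_inv _ hSdet, one_mul,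
      Matrix.mul_assoc, nonsing_inv_mul _ hSdet, mul_one]
  -- E = S * (Z - 1) * S
  set G : Matrix (Fin d) (Fin d) ℝ := Z - 1 with hGdef
  have hGherm : G.IsHermitian := hZH.sub isHermitian_one
  have hE : N - M = S * G * S := by
    rw [hGdef, mul_sub, mul_one, sub_mul, hSS, ← hNZ]
  -- trace identities
  have hSS2 : ∀ X : Matrix (Fin d) (Fin d) ℝ, S * (S * X) = M * X := fun X => by
    rw [← Matrix.mul_assoc, hSS]
  have hEE : ((N - M) * (N - M)).trace = (G * M * (G * M)).trace := by
    rw [hE]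
    simp only [Matrix.mul_assoc]
    rw [hSS2 (G * S)]
    rw [trace_mul_comm]
    simp only [Matrix.mul_assoc]
    rw [hSS]
  -- G*M*G is psd
  have hB : (G * M * G).PosSemidef := by
    have := hM.posSemidef.conjTranspose_mul_mul_same G
    rwa [hGherm.eq] at this
  -- step (14)
  have h14 : (G * M * (G * M)).trace ≤ C * (G * M * G).trace := by
    rw [← Matrix.mul_assoc]
    exact trace_mul_le' hB hMC
  -- spectral decomposition of G
  have hG2 : G = V * diagonal (fun i => ev i - 1) * star V := by
    rw [hGdef, hspec]
    have h1 : (1 : Matrix (Fin d) (Fin d) ℝ) = V * (1 : Matrix (Fin d) (Fin d) ℝ) * star V := by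
      rw [mul_one, hVV']
    conv_lhs => rw [h1]
    rw [← sub_mul, ← mul_sub, ← diagonal_one, diagonal_sub]
  have hVV2 : ∀ X : Matrix (Fin d) (Fin d) ℝ, star V * (V * X) = X := fun X => by
    rw [← Matrix.mul_assoc, hVV, one_mul]
  set P : Matrix (Fin d) (Fin d) ℝ := star V * M * V with hPdef
  have hdd : diagonal (fun i => ev i - 1) * diagonal (fun i => ev i - 1)
      = diagonal (fun i => (ev i - 1) ^ 2) := by
    have hsq : (fun i => (ev i - 1) * (ev i - 1)) = fun i => (ev i - 1) ^ 2 := by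
      funext i; ring
    rw [diagonal_mul_diagonal, hsq]
  have hGG : G * G = V * diagonal (fun i => (ev i - 1) ^ 2) * star V := by
    rw [hG2]
    simp only [Matrix.mul_assoc]
    rw [hVV2 (diagonal (fun i => ev i - 1) * star V),
      ← Matrix.mul_assoc (diagonal (fun i => ev i - 1)), hdd]
  -- step (15)
  have h15 : (G * M * G).trace = ∑ i, (ev i - 1) ^ 2 * P i i := by
    rw [trace_mul_cycle, hGG]
    calc (V * diagonal (fun i => (ev i - 1) ^ 2) * star V * M).trace
        = (P * diagonal fun i => (ev i - 1) ^ 2).trace := by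
          have e1 : V * diagonal (fun i => (ev i - 1) ^ 2) * star V * M
              = (V * diagonal (fun i => (ev i - 1) ^ 2)) * (star V * M) := by
            simp only [Matrix.mul_assoc]
          rw [e1, trace_mul_comm, hPdef]
          simp only [Matrix.mul_assoc]
    _ = ∑ i, (ev i - 1) ^ 2 * P i i := trace_mul_diagonal' _ _
  -- P diag bounds
  have hPpsd : P.PosSemidef := by
    have := hM.posSemidef.conjTranspose_mul_mul_same V
    rwa [← star_eq_conjTranspose] at this
  have hsmul1 : ∀ W : Matrix (Fin d) (Fin d) ℝ, star W * W = 1 →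
      star W * (C • (1 : Matrix (Fin d) (Fin d) ℝ)) * W = C • 1 := by
    intro W hW
    rw [mul_smul_comm, mul_one, smul_mul_assoc, hW]
  have hPC : ∀ i, P i i ≤ C := by
    intro i
    have hconj : (C • (1 : Matrix (Fin d) (Fin d) ℝ)) - P
        = star V * ((C • (1 : Matrix (Fin d) (Fin d) ℝ)) - M) * V := by
      rw [mul_sub, sub_mul, hPdef, hsmul1 V hVV]
    have hpsd : ((C • (1 : Matrix (Fin d) (Fin d) ℝ)) - P).PosSemidef := by
      rw [hconj, star_eq_conjTranspose]
      exact hMC.conjTranspose_mul_mul_same V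
    have := diag_nonneg' hpsd i
    simp only [Matrix.sub_apply, Matrix.smul_apply, Matrix.one_apply_eq, smul_eq_mul,
      mul_one] at this
    linarith
  -- step: ev i * P i i ≤ C
  set W : Matrix (Fin d) (Fin d) ℝ := S * V * diagonal (fun i => Real.sqrt (ev i)) with hWdef
  have hdiagH : (diagonal (fun i => Real.sqrt (ev i)))ᴴ = diagonal (fun i => Real.sqrt (ev i)) := by
    rw [diagonal_conjTranspose]
    congr
  have hWH : Wᴴ = diagonal (fun i => Real.sqrt (ev i)) * (star V * S) := by
    rw [hWdef, conjTranspose_mul, conjTranspose_mul, hdiagH, hSherm.eq,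
      ← star_eq_conjTranspose]
  have hsqrtsq : diagonal (fun i => Real.sqrt (ev i)) * diagonal (fun i => Real.sqrt (ev i))
      = diagonal ev := by
    have hsq2 : (fun i => Real.sqrt (ev i) * Real.sqrt (ev i)) = ev := by
      funext i; exact Real.mul_self_sqrt (hevpos i).le
    rw [diagonal_mul_diagonal, hsq2]
  have hWWt : W * Wᴴ = N := by
    rw [hWH, hWdef]
    calc S * V * diagonal (fun i => Real.sqrt (ev i))
          * (diagonal (fun i => Real.sqrt (ev i)) * (star V * S))
        = S * (V * diagonal ev * star V) * S := by
          simp only [Matrix.mul_assoc, hsqrtsq]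
          rw [← Matrix.mul_assoc (diagonal (fun i => Real.sqrt (ev i)))
            (diagonal (fun i => Real.sqrt (ev i))), hsqrtsq]
    _ = N := by rw [← hspec, ← hNZ]
  have hWtW : ∀ i, (Wᴴ * W) i i = ev i * P i i := by
    intro i
    rw [hWH, hWdef]
    have : diagonal (fun i => Real.sqrt (ev i)) * (star V * S) * (S * V
        * diagonal fun i => Real.sqrt (ev i))
        = diagonal (fun i => Real.sqrt (ev i)) * P * diagonal (fun i => Real.sqrt (ev i)) := by
      rw [hPdef]
      simp only [Matrix.mul_assoc]
      rw [hSS2 (V * diagonal fun i => Real.sqrt (ev i))]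
    rw [this]
    rw [mul_diagonal, diagonal_mul]
    rw [show Real.sqrt (ev i) * P i i * Real.sqrt (ev i)
      = (Real.sqrt (ev i) * Real.sqrt (ev i)) * P i i from by ring,
      Real.mul_self_sqrt (hevpos i).le]
  have hevPC : ∀ i, ev i * P i i ≤ C := by
    intro i
    have hpsd : ((C • (1 : Matrix (Fin d) (Fin d) ℝ)) - Wᴴ * W).PosSemidef := by
      apply shift_psd hC
      rwa [hWWt]
    have := diag_nonneg' hpsd i
    simp only [Matrix.sub_apply, Matrix.smul_apply, Matrix.one_apply_eq, smul_eq_mul,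
      mul_one] at this
    rw [hWtW i] at this
    linarith
  -- scalar bound summed
  have h16 : ∑ i, (ev i - 1) ^ 2 * P i i ≤ ∑ i, 2 * C * (ev i - 1 - Real.log (ev i)) := by
    apply Finset.sum_le_sum
    intro i _
    exact scalar_key (hevpos i) (diag_nonneg' hPpsd i) (hPC i) (hevPC i) hC
  -- determinant and trace identities
  have hZdet : Z.det = ∏ i, ev i := by simpa using hZH.det_eq_prod_eigenvalues
  have hNdet2 : N.det = M.det * Z.det := by
    rw [hNZ, det_mul, det_mul]
    rw [← hSdet2]; ring
  have hZdetpos : 0 < Z.det := hZposdef.det_pos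
  have hlogN : Real.log N.det = Real.log M.det + ∑ i, Real.log (ev i) := by
    rw [hNdet2, Real.log_mul hMdet.ne' hZdetpos.ne', hZdet,
      Real.log_prod fun i _ => (hevpos i).ne']
  have htrZ : Z.trace = ∑ i, ev i := by
    conv_lhs => rw [hspec]
    rw [trace_mul_cycle, hVV, one_mul, trace_diagonal]
  have hMinv : M⁻¹ = S⁻¹ * S⁻¹ := by rw [← hSS, Matrix.mul_inv_rev]
  have htrinv : (M⁻¹ * (N - M)).trace = (∑ i, ev i) - d := by
    rw [mul_sub, trace_sub, nonsing_inv_mul _ hMdetu, trace_one]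
    have h1 : (M⁻¹ * N).trace = Z.trace := by
      rw [hMinv, hZdef, Matrix.mul_assoc, trace_mul_comm]
    rw [h1, htrZ]
    simp
  -- rewrite RHS
  have hRHS : (-Real.log N.det) - (-Real.log M.det) - (-(M⁻¹ * (N - M)).trace)
      = ∑ i, (ev i - 1 - Real.log (ev i)) := by
    rw [hlogN, htrinv]
    have h1 : ∑ i, (ev i - 1 - Real.log (ev i))
        = (∑ i, ev i) - (∑ _i : Fin d, (1:ℝ)) - ∑ i, Real.log (ev i) := by
      rw [← Finset.sum_sub_distrib, ← Finset.sum_sub_distrib]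
    rw [h1]
    simp [Finset.sum_const]
    ring
  -- rewrite LHS
  have hEherm : (N - M).IsHermitian := hN.1.sub hM.1
  have hEt : (N - M)ᵀ = N - M := by
    rw [← conjTranspose_eq_transpose_of_trivial]
    exact hEherm.eq
  have hfrobsq : frob (N - M) ^ 2 = ((N - M) * (N - M)).trace := by
    rw [frob, Real.sq_sqrt, hEt]
    have : ((N - M)ᵀ * (N - M)).PosSemidef := by
      have := posSemidef_conjTranspose_mul_self (N - M)
      rwa [conjTranspose_eq_transpose_of_trivial] at this
    exact trace_nonneg' this
  -- final assembly
  rw [hRHS, hfrobsq]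
  have hchain : ((N - M) * (N - M)).trace ≤ 2 * C ^ 2 * ∑ i, (ev i - 1 - Real.log (ev i)) := by
    rw [hEE]
    calc (G * M * (G * M)).trace ≤ C * (G * M * G).trace := h14
    _ = C * ∑ i, (ev i - 1) ^ 2 * P i i := by rw [h15]
    _ ≤ C * ∑ i, 2 * C * (ev i - 1 - Real.log (ev i)) :=
        mul_le_mul_of_nonneg_left h16 hC.le
    _ = 2 * C ^ 2 * ∑ i, (ev i - 1 - Real.log (ev i)) := by
        rw [Finset.mul_sum, Finset.mul_sum]
        exact Finset.sum_congr rfl fun i _ => by ring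
  have h2C2 : (0:ℝ) < 2 * C ^ 2 := by positivity
  rw [div_mul_eq_mul_div, div_le_iff₀ h2C2, one_mul]
  calc ((N - M) * (N - M)).trace ≤ 2 * C ^ 2 * ∑ i, (ev i - 1 - Real.log (ev i)) := hchain
  _ = (∑ i, (ev i - 1 - Real.log (ev i))) * (2 * C ^ 2) := by ring
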